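/- Let K : ℝ³ × ℝ³ → ℂ be measurable and satisfy, for a.e. (x,y), |K(x,y)| ≤ ⟨|x| − |y|⟩^{−2} ⟨x⟩^{−1} ⟨y⟩^{−1} + ⟨|x| − |y|⟩^{−1} min(⟨x⟩^{−2}, ⟨y⟩^{−2}). Then for every q with 6 < q < ∞ there is a constant C_q (independent of K and f) such that for every f ∈ L^q(ℝ³) and a.e. x ∈ ℝ³, | ∫_{ℝ³} K(x,y) f(y) dy | ≤ C_q ‖f‖_{L^q(ℝ³)}; that is, the integral operator with kernel K is bounded from L^q(ℝ³) to L^∞(ℝ³). -/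

import Mathlib

open MeasureTheory Real
open scoped ENNReal NNReal

open Set Metric

local notation "E3" => EuclideanSpace ℝ (Fin 3)

lemma lintegral_norm3 (g : ℝ → ℝ≥0∞) (hg : Measurable g) :
    ∫⁻ x : E3, g ‖x‖ ∂volume =
      (volume : Measure E3).toSphere univ *
        ∫⁻ r in Ioi (0 : ℝ), ENNReal.ofReal (r ^ 2) * g r ∂volume := by
  have h2 : Module.finrank ℝ E3 - 1 = 2 := by
    rw [finrank_euclideanSpace_fin]
  have hmp := (volume : Measure E3).measurePreserving_homeomorphUnitSphereProd
  rw [h2] at hmp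
  calc ∫⁻ x : E3, g ‖x‖ ∂volume
      = ∫⁻ x in ({(0 : E3)}ᶜ : Set E3), g ‖x‖ ∂volume := by
        rw [MeasureTheory.restrict_compl_singleton]
    _ = ∫⁻ x : ({(0 : E3)}ᶜ : Set E3), g ‖(x : E3)‖ ∂((volume : Measure E3).comap (↑)) :=
        (lintegral_subtype_comap (measurableSet_singleton _).compl _).symm
    _ = ∫⁻ p : sphere (0 : E3) 1 × Ioi (0 : ℝ), g p.2
          ∂((volume : Measure E3).toSphere.prod (Measure.volumeIoiPow 2)) := by
        rw [← hmp.lintegral_comp_emb (Homeomorph.measurableEmbedding _) (fun p => g p.2)]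
        exact lintegral_congr fun x => by
          rw [homeomorphUnitSphereProd_apply_snd_coe]
    _ = (volume : Measure E3).toSphere univ *
          ∫⁻ r : Ioi (0 : ℝ), g r ∂(Measure.volumeIoiPow 2) := by
        have hm : AEMeasurable (fun p : sphere (0 : E3) 1 × Ioi (0 : ℝ) => g ↑p.2)
            ((volume : Measure E3).toSphere.prod (Measure.volumeIoiPow 2)) :=
          (((hg.comp measurable_subtype_coe).comp measurable_snd) :
            Measurable fun p : sphere (0 : E3) 1 × Ioi (0 : ℝ) => g ↑p.2).aemeasurable
        rw [lintegral_prod (fun p : sphere (0 : E3) 1 × Ioi (0 : ℝ) => g ↑p.2) hm]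
        simp [lintegral_const, mul_comm]
    _ = (volume : Measure E3).toSphere univ *
          ∫⁻ r in Ioi (0 : ℝ), ENNReal.ofReal (r ^ 2) * g r ∂volume := by
        congr 1
        rw [Measure.volumeIoiPow,
          lintegral_withDensity_eq_lintegral_mul _
            (((measurable_subtype_coe.pow_const 2).ennreal_ofReal :
              Measurable fun r : Ioi (0:ℝ) => ENNReal.ofReal ((r : ℝ) ^ 2)))
            (hg.comp' measurable_subtype_coe)]
        simp only [Pi.mul_apply]
        exact lintegral_subtype_comap measurableSet_Ioi
          (fun r : ℝ => ENNReal.ofReal (r ^ 2) * g r)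

lemma pointwise_bound {p : ℝ} (hp1 : 1 ≤ p) (hp2 : p ≤ 2) (R r : ℝ) :
    (1 + (R - r) ^ 2) ^ (-(1 : ℝ)) * (1 + R ^ 2) ^ (-(1 / 2 : ℝ)) * (1 + r ^ 2) ^ (-(1 / 2 : ℝ)) +
      (1 + (R - r) ^ 2) ^ (-(1 / 2 : ℝ)) * min ((1 + R ^ 2)⁻¹) ((1 + r ^ 2)⁻¹)
    ≤ 3 * ((1 + (R - r) ^ 2) ^ (-(1 / 2 : ℝ)) * (1 + r ^ 2) ^ (-(1 / p))) := by
  have hp0 : (0 : ℝ) < p := by linarith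
  set a : ℝ := 1 + (R - r) ^ 2 with ha_def
  set b : ℝ := 1 + R ^ 2 with hb_def
  set c : ℝ := 1 + r ^ 2 with hc_def
  have ha : (1 : ℝ) ≤ a := by nlinarith [sq_nonneg (R - r)]
  have hb : (1 : ℝ) ≤ b := by nlinarith [sq_nonneg R]
  have hc : (1 : ℝ) ≤ c := by nlinarith [sq_nonneg r]
  have ha0 : (0 : ℝ) < a := by linarith
  have hb0 : (0 : ℝ) < b := by linarith
  have hc0 : (0 : ℝ) < c := by linarith
  have hc2ab : c ≤ 2 * a * b := by
    have h1 : r ^ 2 ≤ 2 * R ^ 2 + 2 * (R - r) ^ 2 := by nlinarith [sq_nonneg (2 * R - r)]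
    nlinarith [sq_nonneg (R - r), sq_nonneg R, mul_nonneg (sq_nonneg R) (sq_nonneg (R - r))]
  have he1 : (0 : ℝ) ≤ 1 / p - 1 / 2 := by
    have : 1 / 2 ≤ 1 / p := by
      rw [div_le_div_iff₀ (by norm_num) hp0]; linarith
    linarith
  have he2 : 1 / p - 1 / 2 ≤ 1 / 2 := by
    have : 1 / p ≤ 1 := by rw [div_le_one hp0]; linarith
    linarith
  have key : c ^ (1 / p - 1 / 2) ≤ 2 * (a ^ (1 / 2 : ℝ) * b ^ (1 / 2 : ℝ)) := by
    calc c ^ (1 / p - 1 / 2) ≤ (2 * a * b) ^ (1 / p - 1 / 2) :=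
          Real.rpow_le_rpow hc0.le hc2ab he1
      _ = (2 : ℝ) ^ (1 / p - 1 / 2) * a ^ (1 / p - 1 / 2) * b ^ (1 / p - 1 / 2) := by
          rw [Real.mul_rpow (by positivity) hb0.le, Real.mul_rpow (by norm_num) ha0.le]
      _ ≤ (2 : ℝ) ^ (1 : ℝ) * a ^ (1 / 2 : ℝ) * b ^ (1 / 2 : ℝ) := by
          gcongr <;> first | exact one_le_two | exact ha | exact hb | linarith
      _ = 2 * (a ^ (1 / 2 : ℝ) * b ^ (1 / 2 : ℝ)) := by rw [Real.rpow_one]; ring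
  have hT1 : a ^ (-(1 : ℝ)) * b ^ (-(1 / 2 : ℝ)) * c ^ (-(1 / 2 : ℝ))
      ≤ 2 * (a ^ (-(1 / 2 : ℝ)) * c ^ (-(1 / p))) := by
    have hsplit : c ^ (-(1 / 2 : ℝ)) = c ^ (-(1 / p)) * c ^ (1 / p - 1 / 2) := by
      rw [← Real.rpow_add hc0]; ring_nf
    rw [hsplit]
    calc a ^ (-(1 : ℝ)) * b ^ (-(1 / 2 : ℝ)) * (c ^ (-(1 / p)) * c ^ (1 / p - 1 / 2))
        ≤ a ^ (-(1 : ℝ)) * b ^ (-(1 / 2 : ℝ)) *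
            (c ^ (-(1 / p)) * (2 * (a ^ (1 / 2 : ℝ) * b ^ (1 / 2 : ℝ)))) := by
          gcongr
      _ = 2 * ((a ^ (-(1 : ℝ)) * a ^ (1 / 2 : ℝ)) * (b ^ (-(1 / 2 : ℝ)) * b ^ (1 / 2 : ℝ)) *
            c ^ (-(1 / p))) := by ring
      _ = 2 * (a ^ (-(1 / 2 : ℝ)) * c ^ (-(1 / p))) := by
          rw [← Real.rpow_add ha0, ← Real.rpow_add hb0]
          norm_num
  have hT2 : a ^ (-(1 / 2 : ℝ)) * min (b⁻¹) (c⁻¹)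
      ≤ a ^ (-(1 / 2 : ℝ)) * c ^ (-(1 / p)) := by
    have h2 : (c : ℝ)⁻¹ ≤ c ^ (-(1 / p)) := by
      rw [← Real.rpow_neg_one c]
      apply Real.rpow_le_rpow_of_exponent_le hc
      have : 1 / p ≤ 1 := by rw [div_le_one hp0]; linarith
      linarith
    exact mul_le_mul_of_nonneg_left ((min_le_right _ _).trans h2) (by positivity)
  linarith [hT1, hT2]

lemma uniform_bound {p : ℝ} (hp1 : 1 < p) (hp2 : p ≤ 2) :
    ∃ M : ℝ≥0∞, M ≠ ∞ ∧ ∀ x : E3,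
      (∫⁻ y : E3, (ENNReal.ofReal
        ((1 + (‖x‖ - ‖y‖) ^ 2) ^ (-(1 : ℝ)) * (1 + ‖x‖ ^ 2) ^ (-(1 / 2 : ℝ)) *
            (1 + ‖y‖ ^ 2) ^ (-(1 / 2 : ℝ)) +
          (1 + (‖x‖ - ‖y‖) ^ 2) ^ (-(1 / 2 : ℝ)) *
            min ((1 + ‖x‖ ^ 2)⁻¹) ((1 + ‖y‖ ^ 2)⁻¹))) ^ p ∂volume) ≤ M := by
  have hp0 : (0 : ℝ) < p := by linarith
  set S : ℝ≥0∞ := (volume : Measure E3).toSphere univ with hS_def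
  set I : ℝ≥0∞ := ∫⁻ s : ℝ, ENNReal.ofReal (9 * (1 + s ^ 2) ^ (-p / 2)) ∂volume with hI_def
  have hS : S ≠ ∞ := by
    rw [hS_def, Measure.toSphere_apply_univ]
    exact ENNReal.mul_ne_top (ENNReal.natCast_ne_top _) measure_ball_lt_top.ne
  have hI : I ≠ ∞ := by
    have hpr : (Module.finrank ℝ ℝ : ℝ) < p := by
      simp only [Module.finrank_self, Nat.cast_one]; linarith
    have hint : Integrable (fun s : ℝ => 9 * (1 + s ^ 2) ^ (-p / 2)) volume := by
      simpa [Real.norm_eq_abs, sq_abs] using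
        ((integrable_rpow_neg_one_add_norm_sq (E := ℝ) (μ := volume) hpr).const_mul 9)
    exact ((lintegral_ofReal_le_lintegral_enorm _).trans_lt hint.2).ne
  refine ⟨S * I, ENNReal.mul_ne_top hS hI, fun x => ?_⟩
  have hpt : ∀ y : E3, (ENNReal.ofReal
        ((1 + (‖x‖ - ‖y‖) ^ 2) ^ (-(1 : ℝ)) * (1 + ‖x‖ ^ 2) ^ (-(1 / 2 : ℝ)) *
            (1 + ‖y‖ ^ 2) ^ (-(1 / 2 : ℝ)) +
          (1 + (‖x‖ - ‖y‖) ^ 2) ^ (-(1 / 2 : ℝ)) *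
            min ((1 + ‖x‖ ^ 2)⁻¹) ((1 + ‖y‖ ^ 2)⁻¹))) ^ p
      ≤ ENNReal.ofReal (9 * ((1 + (‖x‖ - ‖y‖) ^ 2) ^ (-p / 2) * (1 + ‖y‖ ^ 2)⁻¹)) := by
    intro y
    have ha0 : (0 : ℝ) < 1 + (‖x‖ - ‖y‖) ^ 2 := by positivity
    have hc0 : (0 : ℝ) < 1 + ‖y‖ ^ 2 := by positivity
    have h1 := pointwise_bound hp1.le hp2 ‖x‖ ‖y‖
    have hreal : (3 * ((1 + (‖x‖ - ‖y‖) ^ 2) ^ (-(1 / 2 : ℝ)) * (1 + ‖y‖ ^ 2) ^ (-(1 / p)))) ^ p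
        ≤ 9 * ((1 + (‖x‖ - ‖y‖) ^ 2) ^ (-p / 2) * (1 + ‖y‖ ^ 2)⁻¹) := by
      rw [Real.mul_rpow (by norm_num) (by positivity),
        Real.mul_rpow (by positivity) (by positivity)]
      have h3 : (3 : ℝ) ^ p ≤ 9 := by
        calc (3 : ℝ) ^ p ≤ (3 : ℝ) ^ (2 : ℝ) :=
              Real.rpow_le_rpow_of_exponent_le (by norm_num) hp2
          _ = 9 := by
              rw [show (2 : ℝ) = ((2 : ℕ) : ℝ) by norm_num, Real.rpow_natCast]; norm_num
      have h4 : ((1 + (‖x‖ - ‖y‖) ^ 2) ^ (-(1 / 2 : ℝ))) ^ p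
          = (1 + (‖x‖ - ‖y‖) ^ 2) ^ (-p / 2) := by
        rw [← Real.rpow_mul ha0.le]; congr 1; ring
      have h5 : ((1 + ‖y‖ ^ 2) ^ (-(1 / p))) ^ p = (1 + ‖y‖ ^ 2)⁻¹ := by
        rw [← Real.rpow_mul hc0.le]
        rw [show -(1 / p) * p = -1 by field_simp]
        exact Real.rpow_neg_one _
      rw [h4, h5]
      exact mul_le_mul_of_nonneg_right h3 (by positivity)
    calc (ENNReal.ofReal _) ^ p
        ≤ (ENNReal.ofReal (3 * ((1 + (‖x‖ - ‖y‖) ^ 2) ^ (-(1 / 2 : ℝ)) *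
            (1 + ‖y‖ ^ 2) ^ (-(1 / p))))) ^ p :=
          ENNReal.rpow_le_rpow (ENNReal.ofReal_le_ofReal h1) hp0.le
      _ = ENNReal.ofReal ((3 * ((1 + (‖x‖ - ‖y‖) ^ 2) ^ (-(1 / 2 : ℝ)) *
            (1 + ‖y‖ ^ 2) ^ (-(1 / p)))) ^ p) :=
          (ENNReal.ofReal_rpow_of_nonneg (by positivity) hp0.le)
      _ ≤ _ := ENNReal.ofReal_le_ofReal hreal
  have hg : Measurable (fun r : ℝ =>
      ENNReal.ofReal (9 * ((1 + (‖x‖ - r) ^ 2) ^ (-p / 2) * (1 + r ^ 2)⁻¹))) := by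
    fun_prop
  calc (∫⁻ y : E3, (ENNReal.ofReal
        ((1 + (‖x‖ - ‖y‖) ^ 2) ^ (-(1 : ℝ)) * (1 + ‖x‖ ^ 2) ^ (-(1 / 2 : ℝ)) *
            (1 + ‖y‖ ^ 2) ^ (-(1 / 2 : ℝ)) +
          (1 + (‖x‖ - ‖y‖) ^ 2) ^ (-(1 / 2 : ℝ)) *
            min ((1 + ‖x‖ ^ 2)⁻¹) ((1 + ‖y‖ ^ 2)⁻¹))) ^ p ∂volume)
      ≤ ∫⁻ y : E3, ENNReal.ofReal
          (9 * ((1 + (‖x‖ - ‖y‖) ^ 2) ^ (-p / 2) * (1 + ‖y‖ ^ 2)⁻¹)) ∂volume :=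
        lintegral_mono hpt
    _ = S * ∫⁻ r in Ioi (0 : ℝ), ENNReal.ofReal (r ^ 2) *
          ENNReal.ofReal (9 * ((1 + (‖x‖ - r) ^ 2) ^ (-p / 2) * (1 + r ^ 2)⁻¹)) ∂volume :=
        lintegral_norm3 _ hg
    _ ≤ S * ∫⁻ r in Ioi (0 : ℝ),
          ENNReal.ofReal (9 * (1 + (‖x‖ - r) ^ 2) ^ (-p / 2)) ∂volume := by
        refine mul_le_mul_right (lintegral_mono fun r => ?_) S
        rw [← ENNReal.ofReal_mul (sq_nonneg r)]
        apply ENNReal.ofReal_le_ofReal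
        have key2 : r ^ 2 * (1 + r ^ 2)⁻¹ ≤ 1 := by
          rw [← div_eq_mul_inv, div_le_one (by positivity)]; linarith [sq_nonneg r]
        have hA : (0 : ℝ) ≤ (1 + (‖x‖ - r) ^ 2) ^ (-p / 2) := Real.rpow_nonneg (by positivity) _
        calc r ^ 2 * (9 * ((1 + (‖x‖ - r) ^ 2) ^ (-p / 2) * (1 + r ^ 2)⁻¹))
            = 9 * (1 + (‖x‖ - r) ^ 2) ^ (-p / 2) * (r ^ 2 * (1 + r ^ 2)⁻¹) := by ring
          _ ≤ 9 * (1 + (‖x‖ - r) ^ 2) ^ (-p / 2) * 1 :=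
              mul_le_mul_of_nonneg_left key2 (by positivity)
          _ = 9 * (1 + (‖x‖ - r) ^ 2) ^ (-p / 2) := mul_one _
    _ ≤ S * ∫⁻ r : ℝ, ENNReal.ofReal (9 * (1 + (‖x‖ - r) ^ 2) ^ (-p / 2)) ∂volume :=
        mul_le_mul_right (lintegral_mono' Measure.restrict_le_self le_rfl) S
    _ = S * I := by
        rw [hI_def]
        congr 1
        exact (Measure.measurePreserving_sub_left volume ‖x‖).lintegral_comp
          (f := fun s : ℝ => ENNReal.ofReal (9 * (1 + s ^ 2) ^ (-p / 2))) (by fun_prop)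

/-- `L^q → L^∞` boundedness (Step 2 of the proof of Theorem 3.4) of an integral operator
whose kernel satisfies the pointwise bound
`|K(x,y)| ≤ ⟨|x|−|y|⟩⁻² ⟨x⟩⁻¹ ⟨y⟩⁻¹ + ⟨|x|−|y|⟩⁻¹ min(⟨x⟩⁻², ⟨y⟩⁻²)`, for `6 < q < ∞`. -/
theorem kernel_op_Lq_to_Linfty (q : ℝ) (hq1 : 6 < q) :
    ∃ C : ℝ, 0 < C ∧
      ∀ K : EuclideanSpace ℝ (Fin 3) → EuclideanSpace ℝ (Fin 3) → ℂ,
        Measurable (Function.uncurry K) →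
        (∀ᵐ z : EuclideanSpace ℝ (Fin 3) × EuclideanSpace ℝ (Fin 3) ∂volume,
          ‖K z.1 z.2‖ ≤
            ((1 + (‖z.1‖ - ‖z.2‖) ^ 2) ^ (-(1 : ℝ))) * (1 + ‖z.1‖ ^ 2) ^ (-(1 / 2 : ℝ)) *
              (1 + ‖z.2‖ ^ 2) ^ (-(1 / 2 : ℝ)) +
            ((1 + (‖z.1‖ - ‖z.2‖) ^ 2) ^ (-(1 / 2 : ℝ))) *
              min ((1 + ‖z.1‖ ^ 2)⁻¹) ((1 + ‖z.2‖ ^ 2)⁻¹)) →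
        ∀ f : EuclideanSpace ℝ (Fin 3) → ℂ, MemLp f (ENNReal.ofReal q) volume →
          ∀ᵐ x : EuclideanSpace ℝ (Fin 3) ∂volume,
            (‖∫ y, K x y * f y‖₊ : ℝ≥0∞)
              ≤ ENNReal.ofReal C * eLpNorm f (ENNReal.ofReal q) volume := by
  have hq0 : (0 : ℝ) < q := by linarith
  have hq1' : (1 : ℝ) < q := by linarith
  set p : ℝ := q / (q - 1) with hp_def
  have hq1pos : (0 : ℝ) < q - 1 := by linarith
  have hp1 : 1 < p := (one_lt_div hq1pos).2 (by linarith)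
  have hp2 : p ≤ 2 := by rw [hp_def, div_le_iff₀ hq1pos]; linarith
  have hpq : p.HolderConjugate q := by
    rw [Real.holderConjugate_iff_eq_conjExponent hp1, hp_def]
    field_simp
    ring
  obtain ⟨M, hM, hMb⟩ := uniform_bound hp1 hp2
  refine ⟨(M ^ (1 / p)).toReal + 1, by positivity, ?_⟩
  intro K hK hKb f hf
  have hKb' : ∀ᵐ z : E3 × E3 ∂((volume : Measure E3).prod volume),
      ‖K z.1 z.2‖ ≤
        ((1 + (‖z.1‖ - ‖z.2‖) ^ 2) ^ (-(1 : ℝ))) * (1 + ‖z.1‖ ^ 2) ^ (-(1 / 2 : ℝ)) *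
          (1 + ‖z.2‖ ^ 2) ^ (-(1 / 2 : ℝ)) +
        ((1 + (‖z.1‖ - ‖z.2‖) ^ 2) ^ (-(1 / 2 : ℝ))) *
          min ((1 + ‖z.1‖ ^ 2)⁻¹) ((1 + ‖z.2‖ ^ 2)⁻¹) := by
    rw [← Measure.volume_eq_prod]; exact hKb
  have hae := Measure.ae_ae_of_ae_prod hKb'
  filter_upwards [hae] with x hx
  have hKm : Measurable fun y : E3 => ((‖K x y‖₊ : ℝ≥0∞)) :=
    (hK.comp measurable_prodMk_left).enorm
  have hfm : AEMeasurable (fun y : E3 => ((‖f y‖₊ : ℝ≥0∞))) volume := hf.1.enorm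
  have hq_ne0 : ENNReal.ofReal q ≠ 0 := by
    simp [ENNReal.ofReal_eq_zero, not_le, hq0]
  have hKint : (∫⁻ y : E3, (‖K x y‖₊ : ℝ≥0∞) ^ p ∂volume) ≤ M := by
    refine le_trans (lintegral_mono_ae ?_) (hMb x)
    filter_upwards [hx] with y hy
    refine ENNReal.rpow_le_rpow ?_ (by positivity)
    rw [← enorm_eq_nnnorm, ← ofReal_norm_eq_enorm]
    exact ENNReal.ofReal_le_ofReal hy
  have hfactor1 : (∫⁻ y : E3, (‖K x y‖₊ : ℝ≥0∞) ^ p ∂volume) ^ (1 / p)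
      ≤ ENNReal.ofReal ((M ^ (1 / p)).toReal + 1) := by
    calc (∫⁻ y : E3, (‖K x y‖₊ : ℝ≥0∞) ^ p ∂volume) ^ (1 / p)
        ≤ M ^ (1 / p) := ENNReal.rpow_le_rpow hKint (by positivity)
      _ = ENNReal.ofReal ((M ^ (1 / p)).toReal) := by
          rw [ENNReal.ofReal_toReal]
          exact (ENNReal.rpow_lt_top_of_nonneg (by positivity) hM).ne
      _ ≤ ENNReal.ofReal ((M ^ (1 / p)).toReal + 1) :=
          ENNReal.ofReal_le_ofReal (by linarith)
  have hfactor2 : (∫⁻ y : E3, (‖f y‖₊ : ℝ≥0∞) ^ q ∂volume) ^ (1 / q)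
      = eLpNorm f (ENNReal.ofReal q) volume := by
    rw [eLpNorm_eq_lintegral_rpow_enorm_toReal hq_ne0 ENNReal.ofReal_ne_top,
      ENNReal.toReal_ofReal hq0.le]
    simp only [enorm_eq_nnnorm]
  calc (‖∫ y, K x y * f y‖₊ : ℝ≥0∞)
      ≤ ∫⁻ y, (‖K x y * f y‖₊ : ℝ≥0∞) ∂volume := enorm_integral_le_lintegral_enorm _
    _ = ∫⁻ y, ((fun y : E3 => (‖K x y‖₊ : ℝ≥0∞)) * fun y : E3 => (‖f y‖₊ : ℝ≥0∞)) y ∂volume := by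
        simp only [Pi.mul_apply, nnnorm_mul, ENNReal.coe_mul]
    _ ≤ (∫⁻ y : E3, (‖K x y‖₊ : ℝ≥0∞) ^ p ∂volume) ^ (1 / p) *
          (∫⁻ y : E3, (‖f y‖₊ : ℝ≥0∞) ^ q ∂volume) ^ (1 / q) :=
        ENNReal.lintegral_mul_le_Lp_mul_Lq volume hpq hKm.aemeasurable hfm
    _ ≤ ENNReal.ofReal ((M ^ (1 / p)).toReal + 1) * eLpNorm f (ENNReal.ofReal q) volume := by
        rw [← hfactor2]
        exact mul_le_mul_left hfactor1 _
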